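/- Let g be a finite-dimensional real Lie algebra with an almost complex structure J. If J is abelian, meaning [Jx, Jy] = [x, y] for all x, y ∈ g, then J is nilpotent: the ascending series g₀ᴶ = 0, gᵢᴶ = { X ∈ g : [X, g] ⊆ g_{i−1}ᴶ and [JX, g] ⊆ g_{i−1}ᴶ } satisfies g_kᴶ = g for some k > 0, provided g is a nilpotent Lie algebra. -/

import Mathlib

section

variable {g : Type*} [LieRing g] [LieAlgebra ℝ g]

/-- One step of the J-ascending series:
`Jstep J S = { X : [X,g] ⊆ S and [JX,g] ⊆ S }`. -/
def Jstep (J : g →ₗ[ℝ] g) (S : Submodule ℝ g) : Submodule ℝ g where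
  carrier := {X | (∀ Y, ⁅X, Y⁆ ∈ S) ∧ (∀ Y, ⁅J X, Y⁆ ∈ S)}
  add_mem' := by
    intro a b ha hb
    refine ⟨fun Y => ?_, fun Y => ?_⟩
    · simpa [add_lie] using S.add_mem (ha.1 Y) (hb.1 Y)
    · simp only [map_add, add_lie]
      exact S.add_mem (ha.2 Y) (hb.2 Y)
  zero_mem' := by
    refine ⟨fun Y => ?_, fun Y => ?_⟩ <;> simp [zero_lie]
  smul_mem' := by
    intro c x hx
    refine ⟨fun Y => ?_, fun Y => ?_⟩
    · simpa [smul_lie] using S.smul_mem c (hx.1 Y)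
    · simp only [map_smul, smul_lie]
      exact S.smul_mem c (hx.2 Y)

/-- The J-ascending series g₀ᴶ = 0, gᵢᴶ = { X : [X,g] ⊆ g_{i−1}ᴶ, [JX,g] ⊆ g_{i−1}ᴶ }. -/
def Jser (J : g →ₗ[ℝ] g) : ℕ → Submodule ℝ g
  | 0 => ⊥
  | i + 1 => Jstep J (Jser J i)

/-- on a finite-dimensional nilpotent real Lie algebra, any abelian
almost complex structure J ([Jx,Jy] = [x,y]) is nilpotent: g_kᴶ = g for some k > 0. -/
theorem stmt_2 [FiniteDimensional ℝ g] [LieRing.IsNilpotent g]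
    (J : g →ₗ[ℝ] g) (hJ2 : ∀ x, J (J x) = -x)
    (habelian : ∀ x y : g, ⁅J x, J y⁆ = ⁅x, y⁆) :
    ∃ k : ℕ, 0 < k ∧ Jser J k = ⊤ := by
  have key : ∀ i : ℕ, ∀ x : g, x ∈ (⊥ : LieSubmodule ℝ g g).ucs i → x ∈ Jser J i := by
    intro i
    induction i with
    | zero => intro x hx; simpa [Jser] using hx
    | succ i ih =>
      intro x hx
      rw [LieSubmodule.ucs_succ, LieSubmodule.mem_normalizer] at hx
      refine ⟨fun Y => ?_, fun Y => ?_⟩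
      · have := ih _ (hx Y)
        have h2 : (⁅x, Y⁆ : g) = -⁅Y, x⁆ := by rw [← lie_skew]
        rw [h2]
        exact (Jser J i).neg_mem this
      · have h1 : (⁅J x, Y⁆ : g) = ⁅x, -(J Y)⁆ := by
          have : J (-(J Y)) = Y := by rw [map_neg, hJ2]; simp
          rw [← this, habelian, this]
        rw [h1, lie_neg, ← lie_skew]
        exact (Jser J i).neg_mem ((Jser J i).neg_mem (ih _ (hx (J Y))))
  obtain ⟨k, hk⟩ := (LieModule.isNilpotent_iff_exists_ucs_eq_top ℝ).mp
    (inferInstance : LieModule.IsNilpotent g g)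
  refine ⟨k + 1, Nat.succ_pos k, ?_⟩
  rw [eq_top_iff]
  intro x _
  apply key
  have h : (⊥ : LieSubmodule ℝ g g).ucs k ≤ (⊥ : LieSubmodule ℝ g g).ucs (k + 1) := by
    rw [LieSubmodule.ucs_succ]
    exact LieSubmodule.le_normalizer _
  rw [hk] at h
  exact h (LieSubmodule.mem_top x)

end
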